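/- Fix an integer m ≥ 1, let b_m be the m-th Taylor coefficient of (1−w)^{−1/2} at 0, and let |u| be sufficiently small (e.g. |u| < 1/2). Then −(i/m)·∫₀^{2πm} sin(t)/√(1 − u e^{it/m}) dt = π b_m u^m. -/

import Mathlib

open Complex Real

private lemma sin_exp_key (m : ℕ) (hm : 1 ≤ m) (k : ℕ) :
    ∫ t in (0:ℝ)..(2 * π * m),
        Complex.sin (t : ℂ) * Complex.exp (Complex.I * (t : ℂ) / (m : ℂ)) ^ k
      = if k = m then Complex.I * π * m else 0 := by
  have hm0 : (m : ℂ) ≠ 0 := by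
    exact_mod_cast Nat.cast_ne_zero.mpr (by omega)
  set c₁ : ℂ := Complex.I * ((k : ℂ) - m) / m with hc₁
  set c₂ : ℂ := Complex.I * ((k : ℂ) + m) / m with hc₂
  have heq : ∀ t : ℝ, Complex.sin (t : ℂ) * Complex.exp (Complex.I * (t : ℂ) / (m : ℂ)) ^ k
      = (Complex.exp (c₁ * t) - Complex.exp (c₂ * t)) * (Complex.I / 2) := by
    intro t
    have h1 : Complex.exp (-(t:ℂ) * Complex.I) * Complex.exp ((k:ℂ) * (Complex.I * t / m))
        = Complex.exp (c₁ * t) := by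
      rw [← Complex.exp_add]; congr 1; rw [hc₁]; field_simp; ring
    have h2 : Complex.exp ((t:ℂ) * Complex.I) * Complex.exp ((k:ℂ) * (Complex.I * t / m))
        = Complex.exp (c₂ * t) := by
      rw [← Complex.exp_add]; congr 1; rw [hc₂]; field_simp; ring
    calc Complex.sin (t : ℂ) * Complex.exp (Complex.I * (t : ℂ) / (m : ℂ)) ^ k
        = (Complex.exp (-(t:ℂ) * Complex.I) * Complex.exp ((k:ℂ) * (Complex.I * t / m))
            - Complex.exp ((t:ℂ) * Complex.I) * Complex.exp ((k:ℂ) * (Complex.I * t / m)))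
            * (Complex.I / 2) := by
          rw [Complex.sin, ← Complex.exp_nat_mul]; ring
      _ = (Complex.exp (c₁ * t) - Complex.exp (c₂ * t)) * (Complex.I / 2) := by
          rw [h1, h2]
  have hcont : ∀ c : ℂ, Continuous fun t : ℝ => Complex.exp (c * t) := by
    intro c; fun_prop
  have hint : ∀ c : ℂ, IntervalIntegrable (fun t : ℝ => Complex.exp (c * t))
      MeasureTheory.volume 0 (2 * π * m) := fun c => (hcont c).intervalIntegrable _ _
  have hI2 : ∫ t in (0:ℝ)..(2 * π * m),
      Complex.exp (c₂ * t) = 0 := by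
    have hc2ne : c₂ ≠ 0 := by
      rw [hc₂]
      have : (k : ℂ) + m ≠ 0 := by
        have : ((k + m : ℕ) : ℂ) ≠ 0 := Nat.cast_ne_zero.mpr (by omega)
        push_cast at this; exact this
      simp [Complex.I_ne_zero, this, hm0]
    rw [integral_exp_mul_complex hc2ne]
    have h1 : c₂ * ((2 * π * m : ℝ) : ℂ) = ((k + m : ℤ) : ℂ) * (2 * π * Complex.I) := by
      rw [hc₂]; push_cast; field_simp
    rw [h1, Complex.exp_int_mul_two_pi_mul_I]
    simp
  rcases eq_or_ne k m with hk | hk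
  · subst hk
    have hc1 : c₁ = 0 := by rw [hc₁]; simp
    simp only [heq, hc1, zero_mul, Complex.exp_zero]
    rw [intervalIntegral.integral_mul_const,
      intervalIntegral.integral_sub ((continuous_const (y := (1:ℂ))).intervalIntegrable _ _)
        (hint c₂)]
    have hI2' : ∫ t in (0:ℝ)..(2 * π * k), Complex.exp (c₂ * t) = 0 := hI2
    rw [hI2']
    simp only [intervalIntegral.integral_const, sub_zero, smul_eq_mul, mul_one, if_pos rfl,
      real_smul]
    push_cast; ring
  · have hc1ne : c₁ ≠ 0 := by
      rw [hc₁]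
      have : (k : ℂ) - m ≠ 0 := by
        intro h
        exact hk (Nat.cast_inj.mp (sub_eq_zero.mp h))
      simp [Complex.I_ne_zero, this, hm0]
    simp only [heq]
    rw [intervalIntegral.integral_mul_const,
      intervalIntegral.integral_sub (hint c₁) (hint c₂), hI2,
      integral_exp_mul_complex hc1ne]
    have h1 : c₁ * ((2 * π * m : ℝ) : ℂ) = ((k - m : ℤ) : ℂ) * (2 * π * Complex.I) := by
      rw [hc₁]; push_cast; field_simp
    rw [h1, Complex.exp_int_mul_two_pi_mul_I]
    simp [hk]

/-- For an integer `m ≥ 1` and `|u| < 1/2`,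
`−(i/m)·∫₀^{2πm} sin(t)/√(1 − u e^{it/m}) dt = π b_m u^m`,
where `b_k` are the Taylor coefficients of the principal branch of `(1−w)^{−1/2}` at `0`. -/
theorem integral_formula_I_m (m : ℕ) (hm : 1 ≤ m) (b : ℕ → ℂ)
    (hb : ∀ w : ℂ, ‖w‖ < 1 →
      HasSum (fun k : ℕ => b k * w ^ k) ((1 - w) ^ (-(1/2 : ℂ))))
    (u : ℂ) (hu : ‖u‖ < 1/2) :
    -(Complex.I / (m : ℂ)) *
      ∫ t in (0:ℝ)..(2 * π * m),
        Complex.sin (t : ℂ) *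
          (1 - u * Complex.exp (Complex.I * (t : ℂ) / (m : ℂ))) ^ (-(1/2 : ℂ))
      = (π : ℂ) * b m * u ^ m := by
  have hm0 : (m : ℂ) ≠ 0 := Nat.cast_ne_zero.mpr (by omega)
  set L : ℝ := 2 * π * m with hL
  have hmR : (1 : ℝ) ≤ (m : ℝ) := by exact_mod_cast hm
  have hL0 : 0 ≤ L := by
    have := Real.pi_pos; rw [hL]; nlinarith
  set μ := MeasureTheory.volume.restrict (Set.Ioc (0:ℝ) L) with hμ
  set F : ℕ → ℝ → ℂ := fun k t =>
    Complex.sin (t : ℂ) * (b k * (u * Complex.exp (Complex.I * t / m)) ^ k) with hF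
  -- the exponential has modulus 1
  have hexp1 : ∀ t : ℝ, ‖Complex.exp (Complex.I * (t : ℂ) / m)‖ = 1 := by
    intro t
    have : Complex.I * (t : ℂ) / m = ((t / m : ℝ) : ℂ) * Complex.I := by
      push_cast; field_simp
    rw [this, Complex.norm_exp_ofReal_mul_I]
  have hsin1 : ∀ t : ℝ, ‖Complex.sin (t : ℂ)‖ ≤ 1 := by
    intro t
    rw [← Complex.ofReal_sin, Complex.norm_real, Real.norm_eq_abs]
    exact abs_le.2 ⟨Real.neg_one_le_sin t, Real.sin_le_one t⟩
  have hFnorm : ∀ k t, ‖F k t‖ ≤ ‖b k‖ * ‖u‖ ^ k := by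
    intro k t
    rw [hF]
    simp only [norm_mul, norm_pow]
    rw [hexp1 t, mul_one]
    calc ‖Complex.sin (t:ℂ)‖ * (‖b k‖ * ‖u‖ ^ k) ≤ 1 * (‖b k‖ * ‖u‖ ^ k) := by
          apply mul_le_mul_of_nonneg_right (hsin1 t) (by positivity)
      _ = ‖b k‖ * ‖u‖ ^ k := one_mul _
  -- summability of ‖b k‖ * ‖u‖^k
  have hhalf : ‖(1/2 : ℂ)‖ < 1 := by norm_num
  have hs := (hb (1/2) hhalf).summable
  obtain ⟨C, hC⟩ := (hs.tendsto_atTop_zero.norm.bddAbove_range)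
  have hCle : ∀ k, ‖b k * (1/2 : ℂ) ^ k‖ ≤ C := fun k => hC (Set.mem_range_self k)
  have hbu : ∀ k, ‖b k‖ * ‖u‖ ^ k ≤ C * (2 * ‖u‖) ^ k := by
    intro k
    have h1 : ‖b k‖ * (1/2 : ℝ) ^ k ≤ C := by
      have h := hCle k
      rw [norm_mul, norm_pow] at h
      simpa using h
    have h2 : ‖b k‖ * ‖u‖ ^ k = (‖b k‖ * (1/2 : ℝ) ^ k) * (2 * ‖u‖) ^ k := by
      rw [mul_assoc, ← mul_pow]; ring_nf
    rw [h2]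
    exact mul_le_mul_of_nonneg_right h1 (by positivity)
  have hgeo : Summable fun k : ℕ => C * (2 * ‖u‖) ^ k := by
    apply Summable.mul_left
    apply summable_geometric_of_lt_one (by positivity) (by linarith)
  have hsumbu : Summable fun k : ℕ => ‖b k‖ * ‖u‖ ^ k :=
    Summable.of_nonneg_of_le (fun k => by positivity) hbu hgeo
  -- integrability of each term
  have hFcont : ∀ k, Continuous (F k) := by
    intro k; rw [hF]; fun_prop
  have hFint : ∀ k, MeasureTheory.Integrable (F k) μ :=
    fun k => ((hFcont k).intervalIntegrable 0 L).1
  have hμfin : μ Set.univ = ENNReal.ofReal L := by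
    rw [hμ, MeasureTheory.Measure.restrict_apply MeasurableSet.univ, Set.univ_inter,
      Real.volume_Ioc, sub_zero]
  -- summability of integrals of norms
  have hbound : ∀ k, ∫ t, ‖F k t‖ ∂μ ≤ (‖b k‖ * ‖u‖ ^ k) * L := by
    intro k
    have hcst : MeasureTheory.Integrable (fun _ : ℝ => ‖b k‖ * ‖u‖ ^ k) μ := by
      rw [hμ]
      exact (MeasureTheory.integrableOn_const_iff).2 (Or.inr (by
        rw [Real.volume_Ioc]; exact ENNReal.ofReal_lt_top))
    calc ∫ t, ‖F k t‖ ∂μ ≤ ∫ _, ‖b k‖ * ‖u‖ ^ k ∂μ :=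
          MeasureTheory.integral_mono (hFint k).norm hcst (fun t => hFnorm k t)
      _ = (‖b k‖ * ‖u‖ ^ k) * L := by
          rw [MeasureTheory.integral_const, MeasureTheory.measureReal_def, hμfin, ENNReal.toReal_ofReal hL0,
            smul_eq_mul, mul_comm]
  have hFnormsum : Summable fun k => ∫ t, ‖F k t‖ ∂μ :=
    Summable.of_nonneg_of_le
      (fun k => MeasureTheory.integral_nonneg fun t => norm_nonneg _)
      hbound (hsumbu.mul_right L)
  -- swap sum and integral
  have hswap := MeasureTheory.hasSum_integral_of_summable_integral_norm hFint hFnormsum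
  -- pointwise tsum
  have htsum : ∀ t : ℝ, (∑' k, F k t)
      = Complex.sin (t : ℂ) * (1 - u * Complex.exp (Complex.I * t / m)) ^ (-(1/2 : ℂ)) := by
    intro t
    have hw : ‖u * Complex.exp (Complex.I * (t : ℂ) / m)‖ < 1 := by
      rw [norm_mul, hexp1 t, mul_one]; linarith
    exact ((hb _ hw).mul_left (Complex.sin (t:ℂ))).tsum_eq
  -- each individual integral
  have hvals : ∀ k, (∫ t, F k t ∂μ) = if k = m then b m * u ^ m * (Complex.I * π * m) else 0 := by
    intro k
    have hptw : ∀ t : ℝ, F k t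
        = (b k * u ^ k) * (Complex.sin (t:ℂ) * Complex.exp (Complex.I * t / m) ^ k) := by
      intro t; rw [hF]; simp only [mul_pow]; ring
    have : (∫ t, F k t ∂μ) = ∫ t in (0:ℝ)..L, F k t := by
      rw [intervalIntegral.integral_of_le hL0, hμ]
    rw [this]
    simp only [hptw]
    rw [intervalIntegral.integral_const_mul, hL, sin_exp_key m hm k]
    rcases eq_or_ne k m with hk | hk
    · subst hk; simp
    · simp [hk]
  have h2 : HasSum (fun k => ∫ t, F k t ∂μ) (b m * u ^ m * (Complex.I * π * m)) := by
    have := hasSum_ite_eq m (b m * u ^ m * (Complex.I * π * (m:ℂ)))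
    exact this.congr_fun fun k => (hvals k).symm ▸ rfl
  have hval : (∫ t, (∑' k, F k t) ∂μ) = b m * u ^ m * (Complex.I * π * m) :=
    (hswap.unique h2)
  have hmain : (∫ t in (0:ℝ)..L,
      Complex.sin (t : ℂ) * (1 - u * Complex.exp (Complex.I * t / m)) ^ (-(1/2 : ℂ)))
      = b m * u ^ m * (Complex.I * π * m) := by
    rw [intervalIntegral.integral_of_le hL0, ← hμ, ← hval]
    exact MeasureTheory.integral_congr_ae (Filter.Eventually.of_forall fun t => (htsum t).symm)
  rw [hmain]
  have : Complex.I * Complex.I = -1 := Complex.I_mul_I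
  field_simp
  ring_nf
  rw [Complex.I_sq]
  ring
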